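/- Let p ∈ ℝ with -2 < p and let g : [t₀, ∞) → ℝ be continuous with |g(s)| ≤ A·s^p for all s ≥ t₀ ≥ 1. Then for every t ≥ 2t₀, the truncated singular integral satisfies |∫_{t/2}^{t - t^{1-ν}} g(s)/(t - s) ds| ≤ C·A·t^p·ν·ln t for any fixed ν ∈ (0,1) and all t sufficiently large, where C is a constant depending only on p and ν. -/

import Mathlib

open Real intervalIntegral

theorem truncated_singular_integral_bound (p ν A t₀ : ℝ)
    (hp : -2 < p) (hν0 : 0 < ν) (hν1 : ν < 1) (ht₀ : 1 ≤ t₀)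
    (g : ℝ → ℝ) (hg : ContinuousOn g (Set.Ici t₀))
    (hA : ∀ s : ℝ, t₀ ≤ s → |g s| ≤ A * s ^ p) :
    ∃ C : ℝ, 0 < C ∧ ∃ T : ℝ, ∀ t : ℝ, 2 * t₀ ≤ t → T ≤ t →
      |∫ s in (t / 2)..(t - t ^ (1 - ν)), g s / (t - s)|
        ≤ C * A * t ^ p * (ν * Real.log t) := by
  set C : ℝ := max 1 ((2:ℝ) ^ (-p)) with hCdef
  have hC1 : (1:ℝ) ≤ C := le_max_left _ _
  refine ⟨C, lt_of_lt_of_le one_pos hC1, max ((2:ℝ) ^ (1/ν)) 3, ?_⟩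
  intro t ht2t₀ hTt
  have ht3 : (3:ℝ) ≤ t := le_trans (le_max_right _ _) hTt
  have ht0 : (0:ℝ) < t := by linarith
  have hA0 : 0 ≤ A := by
    have h1 := hA t₀ le_rfl
    have h2 : (0:ℝ) < t₀ ^ p := Real.rpow_pos_of_pos (by linarith) p
    nlinarith [abs_nonneg (g t₀)]
  have htν : (2:ℝ) ≤ t ^ ν := by
    have h1 : ((2:ℝ) ^ (1/ν)) ^ ν ≤ t ^ ν :=
      Real.rpow_le_rpow (Real.rpow_nonneg (by norm_num) _) (le_trans (le_max_left _ _) hTt) hν0.le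
    have h2 : ((2:ℝ) ^ (1/ν)) ^ ν = 2 := by
      rw [← Real.rpow_mul (by norm_num), one_div, inv_mul_cancel₀ hν0.ne', Real.rpow_one]
    linarith [h1, h2.symm.le]
  have hb : t ^ (1 - ν) ≤ t / 2 := by
    have h1 : t ^ (1 - ν) = t / t ^ ν := by
      rw [Real.rpow_sub ht0, Real.rpow_one]
    rw [h1]
    exact div_le_div_of_nonneg_left ht0.le two_pos htν |>.trans_eq rfl
  set a := t / 2 with hadef
  set b := t - t ^ (1 - ν) with hbdef
  have hab : a ≤ b := by simp only [hadef, hbdef]; linarith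
  have htb : (0:ℝ) < t - b := by
    simp only [hbdef]; simpa using Real.rpow_pos_of_pos ht0 (1 - ν)
  have ht₀a : t₀ ≤ a := by simp only [hadef]; linarith
  have htp : (0:ℝ) < t ^ p := Real.rpow_pos_of_pos ht0 p
  -- pointwise bound
  have hpt : ∀ s ∈ Set.Icc a b, |g s / (t - s)| ≤ C * A * t ^ p / (t - s) := by
    intro s hs
    have hs₀ : t₀ ≤ s := le_trans ht₀a hs.1
    have hts : 0 < t - s := lt_of_lt_of_le htb (by linarith [hs.2])
    have hsp : s ^ p ≤ C * t ^ p := by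
      rcases le_or_gt 0 p with hp0 | hp0
      · have h1 : s ^ p ≤ t ^ p :=
          Real.rpow_le_rpow (by linarith) (by linarith [hs.2, htb]) hp0
        nlinarith
      · have hs0 : (0:ℝ) < s := by linarith
        have h1 : s ^ p ≤ (t/2) ^ p := by
          have := Real.rpow_le_rpow_of_nonpos (by positivity : (0:ℝ) < t/2) hs.1 hp0.le
          simpa [hadef] using this
        have h2 : (t/2) ^ p = t ^ p * (2:ℝ) ^ (-p) := by
          rw [Real.div_rpow ht0.le (by norm_num), Real.rpow_neg (by norm_num)]
          ring
        have h3 : (2:ℝ) ^ (-p) ≤ C := le_max_right _ _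
        nlinarith [Real.rpow_pos_of_pos (show (0:ℝ)<2 by norm_num) (-p)]
    rw [abs_div, abs_of_pos hts, div_le_div_iff_of_pos_right hts]
    calc |g s| ≤ A * s ^ p := hA s hs₀
      _ ≤ C * A * t ^ p := by nlinarith
  -- integrability
  have hcont1 : ContinuousOn (fun s => g s / (t - s)) (Set.uIcc a b) := by
    rw [Set.uIcc_of_le hab]
    apply ContinuousOn.div
    · exact hg.mono (fun x hx => le_trans ht₀a hx.1)
    · exact (continuous_const.sub continuous_id).continuousOn
    · intro x hx
      have : 0 < t - x := lt_of_lt_of_le htb (by linarith [hx.2])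
      linarith
  have hcont2 : ContinuousOn (fun s => C * A * t ^ p / (t - s)) (Set.uIcc a b) := by
    rw [Set.uIcc_of_le hab]
    apply ContinuousOn.div continuousOn_const (continuous_const.sub continuous_id).continuousOn
    intro x hx
    have : 0 < t - x := lt_of_lt_of_le htb (by linarith [hx.2])
    show t - x ≠ 0
    intro h; linarith
  have hint1 : IntervalIntegrable (fun s => g s / (t - s)) MeasureTheory.volume a b :=
    hcont1.intervalIntegrable
  have hint2 : IntervalIntegrable (fun s => C * A * t ^ p / (t - s)) MeasureTheory.volume a b :=
    hcont2.intervalIntegrable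
  have step1 : |∫ s in a..b, g s / (t - s)| ≤ ∫ s in a..b, C * A * t ^ p / (t - s) := by
    refine le_trans (intervalIntegral.abs_integral_le_integral_abs hab) ?_
    refine intervalIntegral.integral_mono_on hab hint1.abs hint2 ?_
    exact hpt
  -- compute RHS integral
  have step2 : ∫ s in a..b, C * A * t ^ p / (t - s)
      = C * A * t ^ p * (Real.log (t - a) - Real.log (t - b)) := by
    have e1 : ∀ s, C * A * t ^ p / (t - s) = C * A * t ^ p * (t - s)⁻¹ := fun s => div_eq_mul_inv _ _
    simp_rw [e1]
    rw [intervalIntegral.integral_const_mul]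
    congr 1
    have e2 : (∫ s in a..b, (t - s)⁻¹) = ∫ x in (t - b)..(t - a), x⁻¹ := by
      exact intervalIntegral.integral_comp_sub_left (fun x => x⁻¹) t
    rw [e2, integral_inv, Real.log_div (by linarith) (by linarith)]
    rw [Set.uIcc_of_le (by linarith : t - b ≤ t - a)]
    rintro ⟨h1, h2⟩
    linarith
  have hta : t - a = t / 2 := by simp [hadef]; ring
  have htbb : t - b = t ^ (1 - ν) := by simp [hbdef]
  have step3 : Real.log (t - a) - Real.log (t - b) ≤ ν * Real.log t := by
    rw [hta, htbb, Real.log_div ht0.ne' (by norm_num), Real.log_rpow ht0]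
    have : 0 < Real.log 2 := Real.log_pos (by norm_num)
    nlinarith
  calc |∫ s in a..b, g s / (t - s)| ≤ C * A * t ^ p * (Real.log (t - a) - Real.log (t - b)) := by
        rw [← step2]; exact step1
    _ ≤ C * A * t ^ p * (ν * Real.log t) := by
        apply mul_le_mul_of_nonneg_left step3
        positivity
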